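/- For every positive integer r, the set T of all separations (A,B) of the grid W_r of order less than r such that B contains a cross is a tangle of order r: (T1) for every separation (A,B) of order < r, exactly one of (A,B), (B,A) is in T; (T2) for any (A₁,B₁),(A₂,B₂),(A₃,B₃) ∈ T, A₁∪A₂∪A₃ ≠ V(W_r). -/

import Mathlib

/-- The `r`-grid. -/
def gridGraph (r : ℕ) : SimpleGraph (Fin r × Fin r) where
  Adj v w := Nat.dist v.1.val w.1.val + Nat.dist v.2.val w.2.val = 1
  symm := by
    constructor
    intro v w h
    simpa [Nat.dist_comm] using h
  loopless := by
    constructor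
    intro v h
    simp [Nat.dist_self] at h

/-- `(A,B)` is a separation of `G`. -/
def IsSeparation {V : Type*} [Fintype V] [DecidableEq V]
    (G : SimpleGraph V) (A B : Finset V) : Prop :=
  A ∪ B = Finset.univ ∧
    ∀ a ∈ A, a ∉ B → ∀ b ∈ B, b ∉ A → ¬ G.Adj a b

/-- `B` contains all vertices of some cross. -/
def ContainsCross {r : ℕ} (B : Finset (Fin r × Fin r)) : Prop :=
  ∃ i j : Fin r, ∀ v : Fin r × Fin r, v.1 = i ∨ v.2 = j → v ∈ B

/-- The natural tangle: separations of order `< r` whose big side contains a cross. -/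
def NaturalTangle (r : ℕ) (A B : Finset (Fin r × Fin r)) : Prop :=
  IsSeparation (gridGraph r) A B ∧ (A ∩ B).card < r ∧ ContainsCross B

namespace TangleAux

variable {r : ℕ}

lemma sep_symm {A B : Finset (Fin r × Fin r)} (h : IsSeparation (gridGraph r) A B) :
    IsSeparation (gridGraph r) B A := by
  refine ⟨by rw [Finset.union_comm]; exact h.1, ?_⟩
  intro b hb hbA a ha haB hadj
  exact h.2 a ha haB b hb hbA (hadj.symm)

lemma mem_union_univ {A B : Finset (Fin r × Fin r)} (h : A ∪ B = Finset.univ)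
    (v : Fin r × Fin r) : v ∈ A ∨ v ∈ B := by
  have : v ∈ A ∪ B := by rw [h]; exact Finset.mem_univ v
  exact Finset.mem_union.1 this

/-- From a cell of `A \ B`, any neighbour is again in `A`. -/
lemma step {A B : Finset (Fin r × Fin r)} (hsep : IsSeparation (gridGraph r) A B)
    {z w : Fin r × Fin r} (hzA : z ∈ A) (hzB : z ∉ B)
    (hadj : (gridGraph r).Adj z w) : w ∈ A := by
  by_contra hwA
  rcases mem_union_univ hsep.1 w with h | h
  · exact hwA h
  · exact hsep.2 z hzA hzB w h hwA hadj

lemma adj_up (c : Fin r) (a : Fin r) (h : a.val + 1 < r) :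
    (gridGraph r).Adj (a, c) (⟨a.val + 1, h⟩, c) := by
  show Nat.dist a.val (a.val + 1) + Nat.dist c.val c.val = 1
  simp [Nat.dist_self, Nat.dist]

lemma adj_down (c : Fin r) (a : Fin r) (h : 0 < a.val) :
    (gridGraph r).Adj (a, c) (⟨a.val - 1, lt_trans (Nat.sub_lt h one_pos) a.isLt⟩, c) := by
  show Nat.dist a.val (a.val - 1) + Nat.dist c.val c.val = 1
  have : Nat.dist a.val (a.val - 1) = 1 := by
    rw [Nat.dist_comm]
    have : a.val - 1 + 1 = a.val := Nat.succ_pred_eq_of_pos h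
    rw [Nat.dist_eq_sub_of_le (by omega)]
    omega
  simp [Nat.dist_self, this]

lemma adj_right (c : Fin r) (a : Fin r) (h : a.val + 1 < r) :
    (gridGraph r).Adj (c, a) (c, ⟨a.val + 1, h⟩) := by
  show Nat.dist c.val c.val + Nat.dist a.val (a.val + 1) = 1
  simp [Nat.dist_self, Nat.dist]

lemma adj_left (c : Fin r) (a : Fin r) (h : 0 < a.val) :
    (gridGraph r).Adj (c, a) (c, ⟨a.val - 1, lt_trans (Nat.sub_lt h one_pos) a.isLt⟩) := by
  show Nat.dist c.val c.val + Nat.dist a.val (a.val - 1) = 1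
  have : Nat.dist a.val (a.val - 1) = 1 := by
    rw [Nat.dist_comm]
    rw [Nat.dist_eq_sub_of_le (by omega)]
    omega
  simp [Nat.dist_self, this]

/-- Propagation along a column free of `A ∩ B`. -/
lemma prop_col {A B : Finset (Fin r × Fin r)} (hsep : IsSeparation (gridGraph r) A B)
    (c : Fin r) (hfree : ∀ x : Fin r, (x, c) ∉ A ∩ B)
    (a : Fin r) (ha : (a, c) ∈ A) (b : Fin r) : (b, c) ∈ A := by
  suffices h : ∀ n : ℕ, ∀ a : Fin r, Nat.dist a.val b.val ≤ n → (a, c) ∈ A → (b, c) ∈ A by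
    exact h (Nat.dist a.val b.val) a le_rfl ha
  intro n
  induction n with
  | zero =>
    intro a hd haA
    have : a = b := Fin.ext (Nat.eq_of_dist_eq_zero (Nat.le_zero.1 hd))
    rwa [this] at haA
  | succ n ih =>
    intro a hd haA
    by_cases hab : a = b
    · rwa [hab] at haA
    have hne : a.val ≠ b.val := fun h => hab (Fin.ext h)
    have hanB : (a, c) ∉ B := fun hB => hfree a (Finset.mem_inter.2 ⟨haA, hB⟩)
    rcases Nat.lt_or_ge a.val b.val with hlt | hge
    · have h1 : a.val + 1 < r := lt_of_le_of_lt hlt b.isLt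
      have hadj := adj_up c a h1
      have hA' := step hsep haA hanB hadj
      apply ih ⟨a.val + 1, h1⟩ _ hA'
      show Nat.dist (a.val + 1) b.val ≤ n
      unfold Nat.dist at hd ⊢
      omega
    · have hgt : b.val < a.val := lt_of_le_of_ne hge (Ne.symm hne)
      have h0 : 0 < a.val := Nat.pos_of_ne_zero (by omega)
      have hadj := adj_down c a h0
      have hA' := step hsep haA hanB hadj
      apply ih _ _ hA'
      show Nat.dist (a.val - 1) b.val ≤ n
      unfold Nat.dist at hd ⊢
      omega

/-- Propagation along a row free of `A ∩ B`. -/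
lemma prop_row {A B : Finset (Fin r × Fin r)} (hsep : IsSeparation (gridGraph r) A B)
    (c : Fin r) (hfree : ∀ x : Fin r, (c, x) ∉ A ∩ B)
    (a : Fin r) (ha : (c, a) ∈ A) (b : Fin r) : (c, b) ∈ A := by
  suffices h : ∀ n : ℕ, ∀ a : Fin r, Nat.dist a.val b.val ≤ n → (c, a) ∈ A → (c, b) ∈ A by
    exact h (Nat.dist a.val b.val) a le_rfl ha
  intro n
  induction n with
  | zero =>
    intro a hd haA
    have : a = b := Fin.ext (Nat.eq_of_dist_eq_zero (Nat.le_zero.1 hd))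
    rwa [this] at haA
  | succ n ih =>
    intro a hd haA
    by_cases hab : a = b
    · rwa [hab] at haA
    have hne : a.val ≠ b.val := fun h => hab (Fin.ext h)
    have hanB : (c, a) ∉ B := fun hB => hfree a (Finset.mem_inter.2 ⟨haA, hB⟩)
    rcases Nat.lt_or_ge a.val b.val with hlt | hge
    · have h1 : a.val + 1 < r := lt_of_le_of_lt hlt b.isLt
      have hadj := adj_right c a h1
      have hA' := step hsep haA hanB hadj
      apply ih ⟨a.val + 1, h1⟩ _ hA'
      show Nat.dist (a.val + 1) b.val ≤ n
      unfold Nat.dist at hd ⊢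
      omega
    · have hgt : b.val < a.val := lt_of_le_of_ne hge (Ne.symm hne)
      have h0 : 0 < a.val := Nat.pos_of_ne_zero (by omega)
      have hadj := adj_left c a h0
      have hA' := step hsep haA hanB hadj
      apply ih _ _ hA'
      show Nat.dist (a.val - 1) b.val ≤ n
      unfold Nat.dist at hd ⊢
      omega

/-- If every row meets `S`, then `S` has at least `r` elements. -/
lemma rows_hit {S : Finset (Fin r × Fin r)}
    (h : ∀ i : Fin r, ∃ v ∈ S, v.1 = i) : r ≤ S.card := by
  classical
  choose f hf hf1 using h
  have hinj : Set.InjOn f (Finset.univ : Finset (Fin r)) := by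
    intro i _ j _ hij
    rw [← hf1 i, ← hf1 j, hij]
  calc r = (Finset.univ : Finset (Fin r)).card := by simp
    _ ≤ S.card := Finset.card_le_card_of_injOn f (fun i _ => hf i) hinj

lemma cols_hit {S : Finset (Fin r × Fin r)}
    (h : ∀ j : Fin r, ∃ v ∈ S, v.2 = j) : r ≤ S.card := by
  classical
  choose f hf hf2 using h
  have hinj : Set.InjOn f (Finset.univ : Finset (Fin r)) := by
    intro i _ j _ hij
    rw [← hf2 i, ← hf2 j, hij]
  calc r = (Finset.univ : Finset (Fin r)).card := by simp
    _ ≤ S.card := Finset.card_le_card_of_injOn f (fun i _ => hf i) hinj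

/-- There is a row avoiding `A ∩ B`. -/
lemma exists_free_row {A B : Finset (Fin r × Fin r)} (hcard : (A ∩ B).card < r) :
    ∃ i : Fin r, ∀ x : Fin r, (i, x) ∉ A ∩ B := by
  by_contra h
  push_neg at h
  have : ∀ i : Fin r, ∃ v ∈ A ∩ B, v.1 = i := by
    intro i
    obtain ⟨x, hx⟩ := h i
    exact ⟨(i, x), hx, rfl⟩
  exact absurd (rows_hit this) (not_le.2 hcard)

lemma exists_free_col {A B : Finset (Fin r × Fin r)} (hcard : (A ∩ B).card < r) :
    ∃ j : Fin r, ∀ x : Fin r, (x, j) ∉ A ∩ B := by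
  by_contra h
  push_neg at h
  have : ∀ j : Fin r, ∃ v ∈ A ∩ B, v.2 = j := by
    intro j
    obtain ⟨x, hx⟩ := h j
    exact ⟨(x, j), hx, rfl⟩
  exact absurd (cols_hit this) (not_le.2 hcard)

/-- `A` and `B` cannot both contain crosses. -/
lemma not_both_cross {A B : Finset (Fin r × Fin r)}
    (hsep : IsSeparation (gridGraph r) A B) (hcard : (A ∩ B).card < r)
    (hA : ContainsCross A) (hB : ContainsCross B) : False := by
  obtain ⟨i, j, hcrA⟩ := hA
  obtain ⟨i', j', hcrB⟩ := hB
  have hhit : ∀ c : Fin r, ∃ v ∈ A ∩ B, v.2 = c := by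
    intro c
    by_contra hc
    push_neg at hc
    have hfree : ∀ x : Fin r, (x, c) ∉ A ∩ B := by
      intro x hx
      exact absurd rfl (hc (x, c) hx)
    have h1 : (i, c) ∈ A := hcrA (i, c) (Or.inl rfl)
    have h2 : (i', c) ∈ B := hcrB (i', c) (Or.inl rfl)
    have h3 : (i', c) ∈ A := prop_col hsep c hfree i h1 i'
    exact hfree i' (Finset.mem_inter.2 ⟨h3, h2⟩)
  exact absurd (cols_hit hhit) (not_le.2 hcard)

/-- One of the two sides contains a cross. -/
lemma cross_side {A B : Finset (Fin r × Fin r)} (hr : 0 < r)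
    (hsep : IsSeparation (gridGraph r) A B) (hcard : (A ∩ B).card < r) :
    ContainsCross A ∨ ContainsCross B := by
  obtain ⟨i₀, hrow⟩ := exists_free_row hcard
  obtain ⟨j₀, hcol⟩ := exists_free_col hcard
  rcases mem_union_univ hsep.1 (i₀, j₀) with hz | hz
  · left
    refine ⟨i₀, j₀, ?_⟩
    rintro ⟨x, y⟩ (h | h)
    · dsimp at h; subst h
      exact prop_row hsep _ hrow _ hz _
    · dsimp at h; subst h
      exact prop_col hsep _ hcol _ hz _
  · right
    have hsep' := sep_symm hsep
    have hrow' : ∀ x : Fin r, (i₀, x) ∉ B ∩ A := by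
      intro x hx; exact hrow x (by rwa [Finset.inter_comm])
    have hcol' : ∀ x : Fin r, (x, j₀) ∉ B ∩ A := by
      intro x hx; exact hcol x (by rwa [Finset.inter_comm])
    refine ⟨i₀, j₀, ?_⟩
    rintro ⟨x, y⟩ (h | h)
    · dsimp at h; subst h
      exact prop_row hsep' _ hrow' _ hz _
    · dsimp at h; subst h
      exact prop_col hsep' _ hcol' _ hz _

end TangleAux

namespace TangleAux

variable {r : ℕ}

/-- Local bundle: a tangle pair. -/
abbrev NT (r : ℕ) (A B : Finset (Fin r × Fin r)) : Prop :=
  IsSeparation (gridGraph r) A B ∧ (A ∩ B).card < r ∧ ContainsCross B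

/-- A row free of the separator is contained in `B` and misses `A`. -/
lemma free_row_B {A B : Finset (Fin r × Fin r)} (hT : NT r A B)
    (i : Fin r) (hfree : ∀ x, (i, x) ∉ A ∩ B) :
    ∀ x, (i, x) ∈ B ∧ (i, x) ∉ A := by
  obtain ⟨hsep, hcard, ic, jc, hcr⟩ := hT
  have hstart : (i, jc) ∈ B := hcr (i, jc) (Or.inr rfl)
  have hsep' := sep_symm hsep
  have hfree' : ∀ x, (i, x) ∉ B ∩ A := by
    intro x hx
    exact hfree x (by rwa [Finset.inter_comm])
  have hB : ∀ x, (i, x) ∈ B := fun x => prop_row hsep' i hfree' jc hstart x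
  intro x
  exact ⟨hB x, fun hA => hfree x (Finset.mem_inter.2 ⟨hA, hB x⟩)⟩

lemma free_col_B {A B : Finset (Fin r × Fin r)} (hT : NT r A B)
    (j : Fin r) (hfree : ∀ x, (x, j) ∉ A ∩ B) :
    ∀ x, (x, j) ∈ B ∧ (x, j) ∉ A := by
  obtain ⟨hsep, hcard, ic, jc, hcr⟩ := hT
  have hstart : (ic, j) ∈ B := hcr (ic, j) (Or.inl rfl)
  have hsep' := sep_symm hsep
  have hfree' : ∀ x, (x, j) ∉ B ∩ A := by
    intro x hx
    exact hfree x (by rwa [Finset.inter_comm])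
  have hB : ∀ x, (x, j) ∈ B := fun x => prop_col hsep' j hfree' ic hstart x
  intro x
  exact ⟨hB x, fun hA => hfree x (Finset.mem_inter.2 ⟨hA, hB x⟩)⟩

lemma row_meets_S {A B : Finset (Fin r × Fin r)} (hT : NT r A B)
    {i x : Fin r} (hx : (i, x) ∈ A) : ∃ y, (i, y) ∈ A ∩ B := by
  by_contra h
  push_neg at h
  exact (free_row_B hT i h x).2 hx

lemma col_meets_S {A B : Finset (Fin r × Fin r)} (hT : NT r A B)
    {j x : Fin r} (hx : (x, j) ∈ A) : ∃ y, (y, j) ∈ A ∩ B := by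
  by_contra h
  push_neg at h
  exact (free_col_B hT j h x).2 hx

/-- No full row fits inside `A`. -/
lemma no_full_row {A B : Finset (Fin r × Fin r)} (hT : NT r A B)
    (i : Fin r) (h : ∀ y, (i, y) ∈ A) : False := by
  have hhit : ∀ c : Fin r, ∃ v ∈ A ∩ B, v.2 = c := by
    intro c
    obtain ⟨y, hy⟩ := col_meets_S hT (h c)
    exact ⟨(y, c), hy, rfl⟩
  exact absurd (cols_hit hhit) (not_le.2 hT.2.1)

lemma no_full_col {A B : Finset (Fin r × Fin r)} (hT : NT r A B)
    (j : Fin r) (h : ∀ y, (y, j) ∈ A) : False := by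
  have hhit : ∀ c : Fin r, ∃ v ∈ A ∩ B, v.1 = c := by
    intro c
    obtain ⟨y, hy⟩ := row_meets_S hT (h c)
    exact ⟨(c, y), hy, rfl⟩
  exact absurd (rows_hit hhit) (not_le.2 hT.2.1)

/-- Under a cover, no row can be free for two of the three tangles. -/
lemma row_free_two {A₁ B₁ A₂ B₂ A₃ B₃ : Finset (Fin r × Fin r)}
    (hT1 : NT r A₁ B₁) (hT2 : NT r A₂ B₂) (hT3 : NT r A₃ B₃)
    (hcov : ∀ v : Fin r × Fin r, v ∈ A₁ ∨ v ∈ A₂ ∨ v ∈ A₃)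
    (i : Fin r) (hf1 : ∀ x, (i, x) ∉ A₁ ∩ B₁) (hf2 : ∀ x, (i, x) ∉ A₂ ∩ B₂) :
    False := by
  have h3 : ∀ y, (i, y) ∈ A₃ := by
    intro y
    rcases hcov (i, y) with h | h | h
    · exact absurd h (free_row_B hT1 i hf1 y).2
    · exact absurd h (free_row_B hT2 i hf2 y).2
    · exact h
  exact no_full_row hT3 i h3

/-- Discrete intermediate value: a crossing point from `P` to `¬P`. -/
lemma nat_cross (P : ℕ → Prop) :
    ∀ (k a : ℕ), P a → ¬ P (a + k) → ∃ y, a ≤ y ∧ y < a + k ∧ P y ∧ ¬ P (y + 1) := by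
  intro k
  induction k with
  | zero =>
    intro a ha hb
    exact absurd ha (by simpa using hb)
  | succ k ih =>
    intro a ha hb
    by_cases h : P (a + k)
    · exact ⟨a + k, by omega, by omega, h, by rwa [show a + k + 1 = a + (k+1) by omega]⟩
    · obtain ⟨y, h1, h2, h3, h4⟩ := ih a ha h
      exact ⟨y, h1, by omega, h3, h4⟩

/-- General: a cell of `A` with a neighbour outside `A` lies in the separator. -/
lemma mem_S_of_adj {A B : Finset (Fin r × Fin r)}
    (hsep : IsSeparation (gridGraph r) A B) {z w : Fin r × Fin r}
    (hz : z ∈ A) (hw : w ∉ A) (hadj : (gridGraph r).Adj z w) : z ∈ A ∩ B := by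
  have hwB : w ∈ B := (mem_union_univ hsep.1 w).resolve_left hw
  refine Finset.mem_inter.2 ⟨hz, ?_⟩
  by_contra hzB
  exact hsep.2 z hz hzB w hwB hw hadj

end TangleAux

namespace TangleAux

variable {r : ℕ}

/-- If a row has `A`-cells at both wall columns but is not fully in `A`,
it contains two separator cells. -/
lemma two_S_in_row {A B : Finset (Fin r × Fin r)} (hT : NT r A B) (hr : 0 < r)
    (i : Fin r)
    (h0 : (i, ⟨0, hr⟩) ∈ A) (hlast : (i, ⟨r - 1, by omega⟩) ∈ A) :
    2 ≤ ((A ∩ B).filter (fun v => v.1 = i)).card := by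
  obtain ⟨z, hz⟩ : ∃ z : Fin r, (i, z) ∉ A := by
    by_contra h
    push_neg at h
    exact no_full_row hT i h
  have hz0 : z.val ≠ 0 := by
    intro h
    exact hz (by rwa [show z = (⟨0, hr⟩ : Fin r) from Fin.ext h])
  have hzl : z.val ≠ r - 1 := by
    intro h
    exact hz (by rwa [show z = (⟨r - 1, by omega⟩ : Fin r) from Fin.ext h])
  have hzlt : z.val < r := z.isLt
  -- left crossing in [0, z)
  set P : ℕ → Prop := fun y => ∃ h : y < r, (i, (⟨y, h⟩ : Fin r)) ∈ A with hP
  have hPz : ¬ P z.val := by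
    rintro ⟨h, hmem⟩
    exact hz (by rwa [show (⟨z.val, h⟩ : Fin r) = z from Fin.ext rfl] at hmem)
  obtain ⟨y₁, hy₁a, hy₁b, ⟨hy₁lt, hy₁P⟩, hy₁n⟩ :=
    nat_cross P z.val 0 ⟨hr, h0⟩ (by simpa using hPz)
  simp only [Nat.zero_add] at hy₁b
  -- right crossing in [z, r-1)
  obtain ⟨y₂, hy₂a, hy₂b, hy₂n, hy₂P⟩ :=
    nat_cross (fun y => ¬ P y) (r - 1 - z.val) z.val hPz
      (by
        rw [show z.val + (r - 1 - z.val) = r - 1 by omega]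
        exact not_not_intro ⟨by omega, hlast⟩)
  rw [not_not] at hy₂P
  obtain ⟨hy₂lt, hy₂mem⟩ := hy₂P
  have hy₂blt : y₂ < r - 1 := by omega
  -- the two separator cells
  have hs₁ : (i, (⟨y₁, hy₁lt⟩ : Fin r)) ∈ A ∩ B := by
    refine mem_S_of_adj hT.1 hy₁P ?_ (adj_right i ⟨y₁, hy₁lt⟩ (by show y₁ + 1 < r; omega))
    intro hmem
    exact hy₁n ⟨by omega, hmem⟩
  have hs₂ : (i, (⟨y₂ + 1, hy₂lt⟩ : Fin r)) ∈ A ∩ B := by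
    have hwn : (i, (⟨y₂, by omega⟩ : Fin r)) ∉ A := by
      intro hmem
      exact hy₂n ⟨by omega, hmem⟩
    have hadj : (gridGraph r).Adj (i, ⟨y₂ + 1, hy₂lt⟩) (i, ⟨y₂, by omega⟩) := by
      show Nat.dist i.val i.val + Nat.dist (y₂ + 1) y₂ = 1
      unfold Nat.dist
      omega
    exact mem_S_of_adj hT.1 hy₂mem hwn hadj
  refine Finset.one_lt_card.2 ⟨_, Finset.mem_filter.2 ⟨hs₁, rfl⟩, _,
    Finset.mem_filter.2 ⟨hs₂, rfl⟩, ?_⟩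
  intro h
  have h2 : (⟨y₁, hy₁lt⟩ : Fin r) = ⟨y₂ + 1, hy₂lt⟩ := congrArg Prod.snd h
  have h3 : y₁ = y₂ + 1 := by simpa using h2
  omega

lemma one_S_in_row {A B : Finset (Fin r × Fin r)} (hT : NT r A B)
    {i x : Fin r} (hx : (i, x) ∈ A) :
    1 ≤ ((A ∩ B).filter (fun v => v.1 = i)).card := by
  obtain ⟨y, hy⟩ := row_meets_S hT hx
  exact Finset.card_pos.2 ⟨(i, y), Finset.mem_filter.2 ⟨hy, rfl⟩⟩

lemma card_eq_sum_rows (S : Finset (Fin r × Fin r)) :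
    S.card = ∑ i : Fin r, (S.filter (fun v => v.1 = i)).card :=
  Finset.card_eq_sum_card_fiberwise (fun v _ => Finset.mem_univ v.1)

end TangleAux

namespace TangleAux

variable {r : ℕ}

/-- Direct kill: no tangle triple covering the grid can have one member whose
`A`-side misses both wall columns. -/
lemma direct_kill (hr : 0 < r)
    {A₁ B₁ A₂ B₂ A₃ B₃ : Finset (Fin r × Fin r)}
    (hT1 : NT r A₁ B₁) (hT2 : NT r A₂ B₂) (hT3 : NT r A₃ B₃)
    (hcov : ∀ v : Fin r × Fin r, v ∈ A₁ ∨ v ∈ A₂ ∨ v ∈ A₃)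
    (hc0 : ∀ x : Fin r, (x, ⟨0, hr⟩) ∉ A₃)
    (hcl : ∀ x : Fin r, (x, ⟨r - 1, by omega⟩) ∉ A₃) : False := by
  have key : ∀ i : Fin r,
      2 ≤ ((A₁ ∩ B₁).filter (fun v => v.1 = i)).card
        + ((A₂ ∩ B₂).filter (fun v => v.1 = i)).card := by
    intro i
    by_cases hf1 : ∀ x, (i, x) ∉ A₁ ∩ B₁
    · have hA1 := fun x => (free_row_B hT1 i hf1 x).2
      have h0 : (i, (⟨0, hr⟩ : Fin r)) ∈ A₂ := by
        rcases hcov (i, ⟨0, hr⟩) with h | h | h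
        · exact absurd h (hA1 _)
        · exact h
        · exact absurd h (hc0 i)
      have hlast : (i, (⟨r - 1, by omega⟩ : Fin r)) ∈ A₂ := by
        rcases hcov (i, ⟨r - 1, by omega⟩) with h | h | h
        · exact absurd h (hA1 _)
        · exact h
        · exact absurd h (hcl i)
      have h2 := two_S_in_row hT2 hr i h0 hlast
      omega
    · push_neg at hf1
      obtain ⟨x₁, hx₁⟩ := hf1
      have h1 : 1 ≤ ((A₁ ∩ B₁).filter (fun v => v.1 = i)).card :=
        Finset.card_pos.2 ⟨(i, x₁), Finset.mem_filter.2 ⟨hx₁, rfl⟩⟩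
      by_cases hf2 : ∀ x, (i, x) ∉ A₂ ∩ B₂
      · have hA2 := fun x => (free_row_B hT2 i hf2 x).2
        have h0 : (i, (⟨0, hr⟩ : Fin r)) ∈ A₁ := by
          rcases hcov (i, ⟨0, hr⟩) with h | h | h
          · exact h
          · exact absurd h (hA2 _)
          · exact absurd h (hc0 i)
        have hlast : (i, (⟨r - 1, by omega⟩ : Fin r)) ∈ A₁ := by
          rcases hcov (i, ⟨r - 1, by omega⟩) with h | h | h
          · exact h
          · exact absurd h (hA2 _)
          · exact absurd h (hcl i)
        have h2 := two_S_in_row hT1 hr i h0 hlast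
        omega
      · push_neg at hf2
        obtain ⟨x₂, hx₂⟩ := hf2
        have h2 : 1 ≤ ((A₂ ∩ B₂).filter (fun v => v.1 = i)).card :=
          Finset.card_pos.2 ⟨(i, x₂), Finset.mem_filter.2 ⟨hx₂, rfl⟩⟩
        omega
  have hsum : 2 * r ≤ (A₁ ∩ B₁).card + (A₂ ∩ B₂).card := by
    rw [card_eq_sum_rows (A₁ ∩ B₁), card_eq_sum_rows (A₂ ∩ B₂),
      ← Finset.sum_add_distrib]
    calc 2 * r = ∑ _i : Fin r, 2 := by simp [Finset.sum_const, mul_comm]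
      _ ≤ _ := Finset.sum_le_sum (fun i _ => key i)
  have hc1 := hT1.2.1
  have hc2 := hT2.2.1
  omega

end TangleAux

namespace TangleAux

variable {r : ℕ}

/-- `B` contains a full row different from any given wall row. -/
lemma exists_full_B_row_ne (hr2 : 2 ≤ r) {A B : Finset (Fin r × Fin r)}
    (hT : NT r A B) (ρ : Fin r) (hρ : ρ.val = 0 ∨ ρ.val = r - 1) :
    ∃ i : Fin r, i ≠ ρ ∧ ∀ y, (i, y) ∈ B := by
  by_contra h
  push_neg at h
  obtain ⟨i₀, hfree⟩ := exists_free_row hT.2.1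
  have hfull : ∀ y, (i₀, y) ∈ B := fun y => (free_row_B hT i₀ hfree y).1
  have hi₀ : i₀ = ρ := by
    by_contra hne
    obtain ⟨y, hy⟩ := h i₀ hne
    exact hy (hfull y)
  subst hi₀
  have hAfree : ∀ y, (i₀, y) ∉ A := fun y => (free_row_B hT i₀ hfree y).2
  rcases hρ with h0 | hl
  · have hne : (⟨1, by omega⟩ : Fin r) ≠ i₀ := by
      apply Fin.ne_of_val_ne
      show (1 : ℕ) ≠ i₀.val
      omega
    obtain ⟨y, hy⟩ := h ⟨1, by omega⟩ hne
    have hyA : ((⟨1, by omega⟩ : Fin r), y) ∈ A :=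
      (mem_union_univ hT.1.1 _).resolve_right hy
    have hadj : (gridGraph r).Adj ((⟨1, by omega⟩ : Fin r), y) (i₀, y) := by
      show Nat.dist 1 i₀.val + Nat.dist y.val y.val = 1
      unfold Nat.dist
      omega
    exact hAfree y (step hT.1 hyA hy hadj)
  · have hne : (⟨r - 2, by omega⟩ : Fin r) ≠ i₀ := by
      apply Fin.ne_of_val_ne
      show r - 2 ≠ i₀.val
      omega
    obtain ⟨y, hy⟩ := h ⟨r - 2, by omega⟩ hne
    have hyA : ((⟨r - 2, by omega⟩ : Fin r), y) ∈ A :=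
      (mem_union_univ hT.1.1 _).resolve_right hy
    have hadj : (gridGraph r).Adj ((⟨r - 2, by omega⟩ : Fin r), y) (i₀, y) := by
      show Nat.dist (r - 2) i₀.val + Nat.dist y.val y.val = 1
      unfold Nat.dist
      omega
    exact hAfree y (step hT.1 hyA hy hadj)

/-- `B` contains a full column different from any given wall column. -/
lemma exists_full_B_col_ne (hr2 : 2 ≤ r) {A B : Finset (Fin r × Fin r)}
    (hT : NT r A B) (γ : Fin r) (hγ : γ.val = 0 ∨ γ.val = r - 1) :
    ∃ j : Fin r, j ≠ γ ∧ ∀ y, (y, j) ∈ B := by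
  by_contra h
  push_neg at h
  obtain ⟨j₀, hfree⟩ := exists_free_col hT.2.1
  have hfull : ∀ y, (y, j₀) ∈ B := fun y => (free_col_B hT j₀ hfree y).1
  have hj₀ : j₀ = γ := by
    by_contra hne
    obtain ⟨y, hy⟩ := h j₀ hne
    exact hy (hfull y)
  subst hj₀
  have hAfree : ∀ y, (y, j₀) ∉ A := fun y => (free_col_B hT j₀ hfree y).2
  rcases hγ with h0 | hl
  · have hne : (⟨1, by omega⟩ : Fin r) ≠ j₀ := by
      apply Fin.ne_of_val_ne
      show (1 : ℕ) ≠ j₀.val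
      omega
    obtain ⟨y, hy⟩ := h ⟨1, by omega⟩ hne
    have hyA : (y, (⟨1, by omega⟩ : Fin r)) ∈ A :=
      (mem_union_univ hT.1.1 _).resolve_right hy
    have hadj : (gridGraph r).Adj (y, (⟨1, by omega⟩ : Fin r)) (y, j₀) := by
      show Nat.dist y.val y.val + Nat.dist 1 j₀.val = 1
      unfold Nat.dist
      omega
    exact hAfree y (step hT.1 hyA hy hadj)
  · have hne : (⟨r - 2, by omega⟩ : Fin r) ≠ j₀ := by
      apply Fin.ne_of_val_ne
      show r - 2 ≠ j₀.val
      omega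
    obtain ⟨y, hy⟩ := h ⟨r - 2, by omega⟩ hne
    have hyA : (y, (⟨r - 2, by omega⟩ : Fin r)) ∈ A :=
      (mem_union_univ hT.1.1 _).resolve_right hy
    have hadj : (gridGraph r).Adj (y, (⟨r - 2, by omega⟩ : Fin r)) (y, j₀) := by
      show Nat.dist y.val y.val + Nat.dist (r - 2) j₀.val = 1
      unfold Nat.dist
      omega
    exact hAfree y (step hT.1 hyA hy hadj)

end TangleAux

namespace TangleAux

/-- Restriction of a vertex set along coordinate embeddings. -/
def res {m r : ℕ} (f g : Fin m → Fin r) (A : Finset (Fin r × Fin r)) :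
    Finset (Fin m × Fin m) :=
  Finset.univ.filter (fun v => (f v.1, g v.2) ∈ A)

lemma mem_res {m r : ℕ} {f g : Fin m → Fin r} {A : Finset (Fin r × Fin r)}
    {v : Fin m × Fin m} : v ∈ res f g A ↔ (f v.1, g v.2) ∈ A := by
  simp [res]

lemma res_inter {m r : ℕ} (f g : Fin m → Fin r) (A B : Finset (Fin r × Fin r)) :
    res f g A ∩ res f g B = res f g (A ∩ B) := by
  ext v
  simp only [Finset.mem_inter, mem_res]

lemma res_sep {m r : ℕ} {f g : Fin m → Fin r}
    (hfd : ∀ a b, Nat.dist (f a).val (f b).val = Nat.dist a.val b.val)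
    (hgd : ∀ a b, Nat.dist (g a).val (g b).val = Nat.dist a.val b.val)
    {A B : Finset (Fin r × Fin r)} (hsep : IsSeparation (gridGraph r) A B) :
    IsSeparation (gridGraph m) (res f g A) (res f g B) := by
  constructor
  · ext v
    simp only [Finset.mem_union, mem_res, Finset.mem_univ, iff_true]
    exact mem_union_univ hsep.1 (f v.1, g v.2)
  · intro a ha hab b hb hba hadj
    refine hsep.2 _ (mem_res.1 ha) (fun h => hab (mem_res.2 h)) _ (mem_res.1 hb)
      (fun h => hba (mem_res.2 h)) ?_
    show Nat.dist (f a.1).val (f b.1).val + Nat.dist (g a.2).val (g b.2).val = 1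
    rw [hfd, hgd]
    exact hadj

lemma res_cover {m r : ℕ} (f g : Fin m → Fin r)
    {A₁ A₂ A₃ : Finset (Fin r × Fin r)} (hcov : A₁ ∪ A₂ ∪ A₃ = Finset.univ) :
    res f g A₁ ∪ res f g A₂ ∪ res f g A₃ = Finset.univ := by
  ext v
  simp only [Finset.mem_union, mem_res, Finset.mem_univ, iff_true]
  have : (f v.1, g v.2) ∈ A₁ ∪ A₂ ∪ A₃ := by
    rw [hcov]; exact Finset.mem_univ _
  simpa only [Finset.mem_union] using this

lemma res_cross {m r : ℕ} {f g : Fin m → Fin r} {B : Finset (Fin r × Fin r)}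
    {i' j' : Fin r} (hrow : ∀ y, (i', y) ∈ B) (hcol : ∀ y, (y, j') ∈ B)
    (hi : ∃ a, f a = i') (hj : ∃ a, g a = j') : ContainsCross (res f g B) := by
  obtain ⟨i₀, rfl⟩ := hi
  obtain ⟨j₀, rfl⟩ := hj
  refine ⟨i₀, j₀, ?_⟩
  rintro ⟨x, y⟩ (h | h) <;> dsimp at h <;> subst h
  · exact mem_res.2 (hrow _)
  · exact mem_res.2 (hcol _)

lemma res_card_le {m r : ℕ} {f g : Fin m → Fin r}
    (hfi : Function.Injective f) (hgi : Function.Injective g)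
    (S : Finset (Fin r × Fin r)) : (res f g S).card ≤ S.card := by
  refine Finset.card_le_card_of_injOn (fun v => (f v.1, g v.2))
    (fun v hv => mem_res.1 hv) ?_
  intro a _ b _ h
  have h1 := congrArg Prod.fst h
  have h2 := congrArg Prod.snd h
  exact Prod.ext (hfi h1) (hgi h2)

lemma res_card_lt {m r : ℕ} {f g : Fin m → Fin r}
    (hfi : Function.Injective f) (hgi : Function.Injective g)
    {ρ γ : Fin r} (hfρ : ∀ a, f a ≠ ρ) (hgγ : ∀ a, g a ≠ γ)
    {S : Finset (Fin r × Fin r)} {z : Fin r × Fin r} (hz : z ∈ S)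
    (hzw : z.1 = ρ ∨ z.2 = γ) : (res f g S).card ≤ S.card - 1 := by
  have h1 : (res f g S).card ≤ (S.erase z).card := by
    refine Finset.card_le_card_of_injOn (fun v => (f v.1, g v.2)) ?_ ?_
    · intro v hv
      refine Finset.mem_erase.2 ⟨?_, mem_res.1 hv⟩
      intro hEq
      rcases hzw with hw | hw
      · exact hfρ v.1 (by rw [← hw, ← hEq])
      · exact hgγ v.2 (by rw [← hw, ← hEq])
    · intro a _ b _ h
      have h1 := congrArg Prod.fst h
      have h2 := congrArg Prod.snd h
      exact Prod.ext (hfi h1) (hgi h2)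
  rw [Finset.card_erase_of_mem hz] at h1
  exact h1

end TangleAux

namespace TangleAux

/-- Descend from the `r`-grid to the `(r-1)`-grid by deleting a wall row `ρ`
and a wall column `γ` that together meet every tight separator. -/
lemma descend {r : ℕ} (hr2 : 2 ≤ r)
    (f g : Fin (r - 1) → Fin r)
    (hfd : ∀ a b, Nat.dist (f a).val (f b).val = Nat.dist a.val b.val)
    (hgd : ∀ a b, Nat.dist (g a).val (g b).val = Nat.dist a.val b.val)
    (ρ γ : Fin r)
    (hfρ : ∀ a, f a ≠ ρ) (hgγ : ∀ a, g a ≠ γ)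
    (hfs : ∀ i, i ≠ ρ → ∃ a, f a = i) (hgs : ∀ j, j ≠ γ → ∃ a, g a = j)
    (hρw : ρ.val = 0 ∨ ρ.val = r - 1) (hγw : γ.val = 0 ∨ γ.val = r - 1)
    {A₁ B₁ A₂ B₂ A₃ B₃ : Finset (Fin r × Fin r)}
    (h₁ : NT r A₁ B₁) (h₂ : NT r A₂ B₂) (h₃ : NT r A₃ B₃)
    (hcov : A₁ ∪ A₂ ∪ A₃ = Finset.univ)
    (hg1 : (A₁ ∩ B₁).card ≤ r - 2 ∨ ∃ v ∈ A₁ ∩ B₁, v.1 = ρ ∨ v.2 = γ)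
    (hg2 : (A₂ ∩ B₂).card ≤ r - 2 ∨ ∃ v ∈ A₂ ∩ B₂, v.1 = ρ ∨ v.2 = γ)
    (hg3 : (A₃ ∩ B₃).card ≤ r - 2 ∨ ∃ v ∈ A₃ ∩ B₃, v.1 = ρ ∨ v.2 = γ)
    (IH : ∀ {A₁' B₁' A₂' B₂' A₃' B₃' : Finset (Fin (r - 1) × Fin (r - 1))},
      NT (r - 1) A₁' B₁' → NT (r - 1) A₂' B₂' → NT (r - 1) A₃' B₃' →
      A₁' ∪ A₂' ∪ A₃' = Finset.univ → False) : False := by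
  have hfi : Function.Injective f := by
    intro a b h
    have := hfd a b
    rw [h, Nat.dist_self] at this
    exact Fin.ext (Nat.eq_of_dist_eq_zero this.symm)
  have hgi : Function.Injective g := by
    intro a b h
    have := hgd a b
    rw [h, Nat.dist_self] at this
    exact Fin.ext (Nat.eq_of_dist_eq_zero this.symm)
  have mkNT : ∀ {A B : Finset (Fin r × Fin r)}, NT r A B →
      ((A ∩ B).card ≤ r - 2 ∨ ∃ v ∈ A ∩ B, v.1 = ρ ∨ v.2 = γ) →
      NT (r - 1) (res f g A) (res f g B) := by
    intro A B hT hgood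
    refine ⟨res_sep hfd hgd hT.1, ?_, ?_⟩
    · rw [res_inter]
      rcases hgood with h | ⟨z, hz, hzw⟩
      · calc (res f g (A ∩ B)).card ≤ (A ∩ B).card := res_card_le hfi hgi _
          _ < r - 1 := by omega
      · calc (res f g (A ∩ B)).card ≤ (A ∩ B).card - 1 :=
            res_card_lt hfi hgi hfρ hgγ hz hzw
          _ < r - 1 := by
            have := hT.2.1
            omega
    · obtain ⟨i', hi'ne, hi'⟩ := exists_full_B_row_ne hr2 hT ρ hρw
      obtain ⟨j', hj'ne, hj'⟩ := exists_full_B_col_ne hr2 hT γ hγw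
      exact res_cross hi' hj' (hfs i' hi'ne) (hgs j' hj'ne)
  exact IH (mkNT h₁ hg1) (mkNT h₂ hg2) (mkNT h₃ hg3) (res_cover f g hcov)

end TangleAux

namespace TangleAux

/-- Choose the embeddings for the chosen wall column `γ` and descend. -/
lemma choose_descend {r : ℕ} (hr2 : 2 ≤ r)
    {A₁ B₁ A₂ B₂ A₃ B₃ : Finset (Fin r × Fin r)}
    (h₁ : NT r A₁ B₁) (h₂ : NT r A₂ B₂) (h₃ : NT r A₃ B₃)
    (hcov : A₁ ∪ A₂ ∪ A₃ = Finset.univ)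
    (γ : Fin r) (hγw : γ.val = 0 ∨ γ.val = r - 1)
    (hg1 : (A₁ ∩ B₁).card ≤ r - 2 ∨
      ∃ v ∈ A₁ ∩ B₁, v.1 = (⟨0, by omega⟩ : Fin r) ∨ v.2 = γ)
    (hg2 : (A₂ ∩ B₂).card ≤ r - 2 ∨
      ∃ v ∈ A₂ ∩ B₂, v.1 = (⟨0, by omega⟩ : Fin r) ∨ v.2 = γ)
    (hg3 : (A₃ ∩ B₃).card ≤ r - 2 ∨
      ∃ v ∈ A₃ ∩ B₃, v.1 = (⟨0, by omega⟩ : Fin r) ∨ v.2 = γ)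
    (IH : ∀ {A₁' B₁' A₂' B₂' A₃' B₃' : Finset (Fin (r - 1) × Fin (r - 1))},
      NT (r - 1) A₁' B₁' → NT (r - 1) A₂' B₂' → NT (r - 1) A₃' B₃' →
      A₁' ∪ A₂' ∪ A₃' = Finset.univ → False) : False := by
  have hfd : ∀ a b : Fin (r - 1),
      Nat.dist ((⟨a.val + 1, by omega⟩ : Fin r)).val
        ((⟨b.val + 1, by omega⟩ : Fin r)).val = Nat.dist a.val b.val := by
    intro a b
    show Nat.dist (a.val + 1) (b.val + 1) = Nat.dist a.val b.val
    unfold Nat.dist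
    omega
  have hfρ : ∀ a : Fin (r - 1),
      (⟨a.val + 1, by omega⟩ : Fin r) ≠ (⟨0, by omega⟩ : Fin r) := by
    intro a
    apply Fin.ne_of_val_ne
    show a.val + 1 ≠ 0
    omega
  have hfs : ∀ i : Fin r, i ≠ (⟨0, by omega⟩ : Fin r) →
      ∃ a : Fin (r - 1), (⟨a.val + 1, by omega⟩ : Fin r) = i := by
    intro i hne
    have hiv : i.val ≠ 0 := by
      intro h
      exact hne (Fin.ext h)
    refine ⟨⟨i.val - 1, by omega⟩, Fin.ext ?_⟩
    show (i.val - 1) + 1 = i.val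
    omega
  rcases hγw with h0 | hl
  · -- γ is column 0 : use the shift embedding on columns as well
    have hgγ : ∀ a : Fin (r - 1), (⟨a.val + 1, by omega⟩ : Fin r) ≠ γ := by
      intro a
      apply Fin.ne_of_val_ne
      show a.val + 1 ≠ γ.val
      omega
    have hgs : ∀ j : Fin r, j ≠ γ →
        ∃ a : Fin (r - 1), (⟨a.val + 1, by omega⟩ : Fin r) = j := by
      intro j hne
      have hjv : j.val ≠ 0 := by
        intro h
        exact hne (Fin.ext (by omega))
      refine ⟨⟨j.val - 1, by omega⟩, Fin.ext ?_⟩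
      show (j.val - 1) + 1 = j.val
      omega
    exact descend hr2 (fun a => ⟨a.val + 1, by omega⟩) (fun a => ⟨a.val + 1, by omega⟩)
      hfd hfd _ _ hfρ hgγ hfs hgs (Or.inl rfl) (Or.inl h0)
      h₁ h₂ h₃ hcov hg1 hg2 hg3 IH
  · -- γ is the last column : use the inclusion embedding on columns
    have hgd : ∀ a b : Fin (r - 1),
        Nat.dist ((⟨a.val, by omega⟩ : Fin r)).val
          ((⟨b.val, by omega⟩ : Fin r)).val = Nat.dist a.val b.val := by
      intro a b
      rfl
    have hgγ : ∀ a : Fin (r - 1), (⟨a.val, by omega⟩ : Fin r) ≠ γ := by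
      intro a
      apply Fin.ne_of_val_ne
      show a.val ≠ γ.val
      have := a.isLt
      omega
    have hgs : ∀ j : Fin r, j ≠ γ → ∃ a : Fin (r - 1), (⟨a.val, by omega⟩ : Fin r) = j := by
      intro j hne
      have hjv : j.val ≠ γ.val := by
        intro h
        exact hne (Fin.ext h)
      have hj : j.val < r - 1 := by
        have := j.isLt
        omega
      exact ⟨⟨j.val, hj⟩, Fin.ext rfl⟩
    exact descend hr2 (fun a => ⟨a.val + 1, by omega⟩) (fun a => ⟨a.val, by omega⟩)
      hfd hgd _ _ hfρ hgγ hfs hgs (Or.inl rfl) (Or.inr hl)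
      h₁ h₂ h₃ hcov hg1 hg2 hg3 IH

end TangleAux

namespace TangleAux

set_option maxHeartbeats 2000000 in
theorem T2_aux : ∀ (r : ℕ) (A₁ B₁ A₂ B₂ A₃ B₃ : Finset (Fin r × Fin r)),
    NT r A₁ B₁ → NT r A₂ B₂ → NT r A₃ B₃ →
    A₁ ∪ A₂ ∪ A₃ = Finset.univ → False := by
  intro r
  induction r using Nat.strong_induction_on with
  | _ r IH =>
  intro A₁ B₁ A₂ B₂ A₃ B₃ h₁ h₂ h₃ hcov
  have hcovm : ∀ v : Fin r × Fin r, v ∈ A₁ ∨ v ∈ A₂ ∨ v ∈ A₃ := by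
    intro v
    have hv : v ∈ A₁ ∪ A₂ ∪ A₃ := by rw [hcov]; exact Finset.mem_univ v
    simp only [Finset.mem_union] at hv
    tauto
  by_cases hr2 : 2 ≤ r
  swap
  · rcases Nat.lt_or_ge r 1 with hc | hc
    · have := h₁.2.1
      omega
    · have hr1 : r = 1 := by omega
      subst hr1
      have hfree : ∀ (A B : Finset (Fin 1 × Fin 1)), NT 1 A B →
          ((0 : Fin 1), (0 : Fin 1)) ∉ A := by
        intro A B hT
        have hcard := hT.2.1
        have hS : ∀ w, w ∉ A ∩ B := by
          intro w hw
          have h1 : 0 < (A ∩ B).card := Finset.card_pos.2 ⟨w, hw⟩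
          omega
        exact (free_row_B hT 0 (fun x => hS (0, x)) 0).2
      rcases hcovm (0, 0) with h | h | h
      · exact hfree _ _ h₁ h
      · exact hfree _ _ h₂ h
      · exact hfree _ _ h₃ h
  have hr0 : 0 < r := by omega
  by_cases hb1 : (∀ x : Fin r, (x, (⟨0, hr0⟩ : Fin r)) ∉ A₁ ∩ B₁) ∧
      (∀ x : Fin r, (x, (⟨r - 1, by omega⟩ : Fin r)) ∉ A₁ ∩ B₁)
  · exact direct_kill hr0 h₂ h₃ h₁
      (fun v => (hcovm v).elim (fun h => Or.inr (Or.inr h))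
        (fun h => h.elim Or.inl (fun h => Or.inr (Or.inl h))))
      (fun x => (free_col_B h₁ _ hb1.1 x).2)
      (fun x => (free_col_B h₁ _ hb1.2 x).2)
  by_cases hb2 : (∀ x : Fin r, (x, (⟨0, hr0⟩ : Fin r)) ∉ A₂ ∩ B₂) ∧
      (∀ x : Fin r, (x, (⟨r - 1, by omega⟩ : Fin r)) ∉ A₂ ∩ B₂)
  · exact direct_kill hr0 h₁ h₃ h₂
      (fun v => (hcovm v).elim Or.inl
        (fun h => h.elim (fun h => Or.inr (Or.inr h)) (fun h => Or.inr (Or.inl h))))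
      (fun x => (free_col_B h₂ _ hb2.1 x).2)
      (fun x => (free_col_B h₂ _ hb2.2 x).2)
  by_cases hb3 : (∀ x : Fin r, (x, (⟨0, hr0⟩ : Fin r)) ∉ A₃ ∩ B₃) ∧
      (∀ x : Fin r, (x, (⟨r - 1, by omega⟩ : Fin r)) ∉ A₃ ∩ B₃)
  · exact direct_kill hr0 h₁ h₂ h₃ hcovm
      (fun x => (free_col_B h₃ _ hb3.1 x).2)
      (fun x => (free_col_B h₃ _ hb3.2 x).2)
  have goodrow : ∀ {A B : Finset (Fin r × Fin r)},
      (¬ ∀ x : Fin r, ((⟨0, hr0⟩ : Fin r), x) ∉ A ∩ B) → ∀ γ : Fin r,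
      (A ∩ B).card ≤ r - 2 ∨
        ∃ v ∈ A ∩ B, v.1 = (⟨0, hr0⟩ : Fin r) ∨ v.2 = γ := by
    intro A B h γ
    push_neg at h
    obtain ⟨x, hx⟩ := h
    exact Or.inr ⟨_, hx, Or.inl rfl⟩
  have goodcol : ∀ {A B : Finset (Fin r × Fin r)} {γ : Fin r},
      (¬ ∀ x : Fin r, (x, γ) ∉ A ∩ B) →
      (A ∩ B).card ≤ r - 2 ∨
        ∃ v ∈ A ∩ B, v.1 = (⟨0, hr0⟩ : Fin r) ∨ v.2 = γ := by
    intro A B γ h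
    push_neg at h
    obtain ⟨x, hx⟩ := h
    exact Or.inr ⟨_, hx, Or.inr rfl⟩
  have IH' : ∀ {A₁' B₁' A₂' B₂' A₃' B₃' : Finset (Fin (r - 1) × Fin (r - 1))},
      NT (r - 1) A₁' B₁' → NT (r - 1) A₂' B₂' → NT (r - 1) A₃' B₃' →
      A₁' ∪ A₂' ∪ A₃' = Finset.univ → False := by
    intro A₁' B₁' A₂' B₂' A₃' B₃' t1 t2 t3 tc
    exact IH (r - 1) (by omega) A₁' B₁' A₂' B₂' A₃' B₃' t1 t2 t3 tc
  by_cases hR1 : ∀ x : Fin r, ((⟨0, hr0⟩ : Fin r), x) ∉ A₁ ∩ B₁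
  · have hR2 : ¬ ∀ x : Fin r, ((⟨0, hr0⟩ : Fin r), x) ∉ A₂ ∩ B₂ :=
      fun h => row_free_two h₁ h₂ h₃ hcovm _ hR1 h
    have hR3 : ¬ ∀ x : Fin r, ((⟨0, hr0⟩ : Fin r), x) ∉ A₃ ∩ B₃ :=
      fun h => row_free_two h₁ h₃ h₂
        (fun v => (hcovm v).elim Or.inl
          (fun h => h.elim (fun h => Or.inr (Or.inr h)) (fun h => Or.inr (Or.inl h)))) _ hR1 h
    by_cases hc1 : (A₁ ∩ B₁).card ≤ r - 2
    · exact choose_descend hr2 h₁ h₂ h₃ hcov ⟨0, hr0⟩ (Or.inl rfl)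
        (Or.inl hc1) (goodrow hR2 _) (goodrow hR3 _) IH'
    · by_cases hcol0 : ∀ x : Fin r, (x, (⟨0, hr0⟩ : Fin r)) ∉ A₁ ∩ B₁
      · have hcoll : ¬ ∀ x : Fin r, (x, (⟨r - 1, by omega⟩ : Fin r)) ∉ A₁ ∩ B₁ :=
          fun h => hb1 ⟨hcol0, h⟩
        exact choose_descend hr2 h₁ h₂ h₃ hcov ⟨r - 1, by omega⟩ (Or.inr rfl)
          (goodcol hcoll) (goodrow hR2 _) (goodrow hR3 _) IH'
      · exact choose_descend hr2 h₁ h₂ h₃ hcov ⟨0, hr0⟩ (Or.inl rfl)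
          (goodcol hcol0) (goodrow hR2 _) (goodrow hR3 _) IH'
  · by_cases hR2 : ∀ x : Fin r, ((⟨0, hr0⟩ : Fin r), x) ∉ A₂ ∩ B₂
    · have hR3 : ¬ ∀ x : Fin r, ((⟨0, hr0⟩ : Fin r), x) ∉ A₃ ∩ B₃ :=
        fun h => row_free_two h₂ h₃ h₁
          (fun v => (hcovm v).elim (fun h => Or.inr (Or.inr h))
          (fun h => h.elim Or.inl (fun h => Or.inr (Or.inl h)))) _ hR2 h
      by_cases hc2 : (A₂ ∩ B₂).card ≤ r - 2
      · exact choose_descend hr2 h₁ h₂ h₃ hcov ⟨0, hr0⟩ (Or.inl rfl)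
          (goodrow hR1 _) (Or.inl hc2) (goodrow hR3 _) IH'
      · by_cases hcol0 : ∀ x : Fin r, (x, (⟨0, hr0⟩ : Fin r)) ∉ A₂ ∩ B₂
        · have hcoll : ¬ ∀ x : Fin r, (x, (⟨r - 1, by omega⟩ : Fin r)) ∉ A₂ ∩ B₂ :=
            fun h => hb2 ⟨hcol0, h⟩
          exact choose_descend hr2 h₁ h₂ h₃ hcov ⟨r - 1, by omega⟩ (Or.inr rfl)
            (goodrow hR1 _) (goodcol hcoll) (goodrow hR3 _) IH'
        · exact choose_descend hr2 h₁ h₂ h₃ hcov ⟨0, hr0⟩ (Or.inl rfl)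
            (goodrow hR1 _) (goodcol hcol0) (goodrow hR3 _) IH'
    · by_cases hR3 : ∀ x : Fin r, ((⟨0, hr0⟩ : Fin r), x) ∉ A₃ ∩ B₃
      · by_cases hc3 : (A₃ ∩ B₃).card ≤ r - 2
        · exact choose_descend hr2 h₁ h₂ h₃ hcov ⟨0, hr0⟩ (Or.inl rfl)
            (goodrow hR1 _) (goodrow hR2 _) (Or.inl hc3) IH'
        · by_cases hcol0 : ∀ x : Fin r, (x, (⟨0, hr0⟩ : Fin r)) ∉ A₃ ∩ B₃
          · have hcoll : ¬ ∀ x : Fin r, (x, (⟨r - 1, by omega⟩ : Fin r)) ∉ A₃ ∩ B₃ :=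
              fun h => hb3 ⟨hcol0, h⟩
            exact choose_descend hr2 h₁ h₂ h₃ hcov ⟨r - 1, by omega⟩ (Or.inr rfl)
              (goodrow hR1 _) (goodrow hR2 _) (goodcol hcoll) IH'
          · exact choose_descend hr2 h₁ h₂ h₃ hcov ⟨0, hr0⟩ (Or.inl rfl)
              (goodrow hR1 _) (goodrow hR2 _) (goodcol hcol0) IH'
      · exact choose_descend hr2 h₁ h₂ h₃ hcov ⟨0, hr0⟩ (Or.inl rfl)
          (goodrow hR1 _) (goodrow hR2 _) (goodrow hR3 _) IH'

end TangleAux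


/-- The set of separations `(A,B)` of the `r`-grid of order `< r` with a cross
contained in `B` is a tangle of order `r`:
(T1) every separation of order `< r` has exactly one orientation in the tangle;
(T2) no three small sides cover the vertex set. -/
theorem naturalTangle_isTangle (r : ℕ) (hr : 0 < r) :
    (∀ A B : Finset (Fin r × Fin r), IsSeparation (gridGraph r) A B →
      (A ∩ B).card < r → Xor' (NaturalTangle r A B) (NaturalTangle r B A)) ∧
    (∀ A₁ B₁ A₂ B₂ A₃ B₃ : Finset (Fin r × Fin r),
      NaturalTangle r A₁ B₁ → NaturalTangle r A₂ B₂ → NaturalTangle r A₃ B₃ →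
      A₁ ∪ A₂ ∪ A₃ ≠ Finset.univ) := by
  constructor
  · intro A B hsep hcard
    rcases TangleAux.cross_side hr hsep hcard with hA | hB
    · exact Or.inr ⟨⟨TangleAux.sep_symm hsep, by rwa [Finset.inter_comm], hA⟩,
        fun ⟨_, _, hB⟩ => TangleAux.not_both_cross hsep hcard hA hB⟩
    · exact Or.inl ⟨⟨hsep, hcard, hB⟩,
        fun ⟨h1, h2, hA⟩ => TangleAux.not_both_cross hsep hcard hA hB⟩
  · intro A₁ B₁ A₂ B₂ A₃ B₃ hT1 hT2 hT3 hcov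
    exact TangleAux.T2_aux r A₁ B₁ A₂ B₂ A₃ B₃ hT1 hT2 hT3 hcov
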